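/- In degree 4 the space of invariant polynomials has dimension 1: every f ∈ P that is homogeneous of degree 4 and invariant under the action of SL₂(ℂ) × SL₂(ℂ) × SL₂(ℂ) is a scalar multiple of Cayley's hyperdeterminant Det, i.e. f = λ • Det for some λ ∈ ℂ. -/

import Mathlib

open MvPolynomial

noncomputable section

abbrev P : Type := MvPolynomial (Fin 2 × Fin 2 × Fin 2) ℂ

/-- The action of a triple of SL₂(ℂ) matrices on the polynomial ring `P`,
as a ℂ-algebra homomorphism determined on variables by
`(A,B,C) · x_{ijk} = ∑ A_{i'i} B_{j'j} C_{k'k} x_{i'j'k'}`. -/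
def act (A B C : Matrix.SpecialLinearGroup (Fin 2) ℂ) : P →ₐ[ℂ] P :=
  MvPolynomial.aeval fun p =>
    ∑ i' : Fin 2, ∑ j' : Fin 2, ∑ k' : Fin 2,
      MvPolynomial.C (A.val i' p.1 * B.val j' p.2.1 * C.val k' p.2.2) *
        MvPolynomial.X (i', j', k')

/-- The variable `x_{ijk}`. -/
def x (i j k : Fin 2) : P := MvPolynomial.X (i, j, k)

/-- Cayley's hyperdeterminant of a 2×2×2 array. -/
def Det : P :=
  x 0 0 0 ^ 2 * x 1 1 1 ^ 2 + x 0 0 1 ^ 2 * x 1 1 0 ^ 2 +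
  x 0 1 0 ^ 2 * x 1 0 1 ^ 2 + x 0 1 1 ^ 2 * x 1 0 0 ^ 2 -
  2 * (x 0 0 0 * x 0 0 1 * x 1 1 0 * x 1 1 1 + x 0 0 0 * x 0 1 0 * x 1 0 1 * x 1 1 1 +
       x 0 0 0 * x 0 1 1 * x 1 0 0 * x 1 1 1 + x 0 0 1 * x 0 1 0 * x 1 0 1 * x 1 1 0 +
       x 0 0 1 * x 0 1 1 * x 1 0 0 * x 1 1 0 + x 0 1 0 * x 0 1 1 * x 1 0 0 * x 1 0 1) +
  4 * (x 0 0 0 * x 0 1 1 * x 1 0 1 * x 1 1 0 + x 0 0 1 * x 0 1 0 * x 1 0 0 * x 1 1 1)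


abbrev σ' : Type := Fin 2 × Fin 2 × Fin 2

lemma scale_aeval (d : σ' → ℂ) (n : σ' →₀ ℕ) (g : P) :
    coeff n (aeval (fun p => C (d p) * X p) g) = (∏ p : σ', d p ^ n p) * coeff n g := by
  induction g using MvPolynomial.induction_on' with
  | add p q hp hq => rw [map_add, coeff_add, hp, hq, coeff_add]; ring
  | monomial m a =>
      have key : (aeval (fun p => C (d p) * X p) : P →ₐ[ℂ] P) (monomial m a)
          = monomial m (a * m.prod fun p e => d p ^ e) := by
        rw [aeval_monomial]
        have h1 : (m.prod fun p e => (C (d p) * X (R := ℂ) p) ^ e)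
            = C (m.prod fun p e => d p ^ e) * m.prod fun p e => X p ^ e := by
          rw [Finsupp.prod_congr (g2 := fun p e => C (d p ^ e) * X p ^ e)
            (fun p _ => by rw [mul_pow, ← C_pow])]
          rw [Finsupp.prod_mul]
          congr 1
          exact (map_prod (C : ℂ →+* P) _ _).symm
        rw [h1, monomial_eq]
        rw [algebraMap_eq, ← mul_assoc, ← C_mul]
      rw [key]
      rcases eq_or_ne m n with rfl | hmn
      · rw [coeff_monomial, if_pos rfl, coeff_monomial, if_pos rfl]
        rw [Finsupp.prod_fintype _ _ (fun p => pow_zero _)]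
        ring
      · rw [coeff_monomial, if_neg hmn, coeff_monomial, if_neg hmn]
        ring

def T : Matrix.SpecialLinearGroup (Fin 2) ℂ :=
  ⟨!![2, 0; 0, 2⁻¹], by norm_num [Matrix.det_fin_two_of]⟩

lemma act_T_fst (g : P) : act T 1 1 g =
    aeval (fun p : σ' => C (if p.1 = (0 : Fin 2) then (2:ℂ) else 2⁻¹) * X p) g := by
  have h : (fun p : σ' => ∑ i' : Fin 2, ∑ j' : Fin 2, ∑ k' : Fin 2,
      MvPolynomial.C (T.val i' p.1 * (1 : Matrix.SpecialLinearGroup (Fin 2) ℂ).val j' p.2.1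
        * (1 : Matrix.SpecialLinearGroup (Fin 2) ℂ).val k' p.2.2) *
        MvPolynomial.X (R := ℂ) (i', j', k'))
      = fun p : σ' => C (if p.1 = (0 : Fin 2) then (2:ℂ) else 2⁻¹) * X p := by
    funext p; obtain ⟨i, j, k⟩ := p
    fin_cases i <;> fin_cases j <;> fin_cases k <;>
      norm_num [T, Fin.sum_univ_two, Matrix.one_apply]
  rw [act, h]

lemma act_T_snd (g : P) : act 1 T 1 g =
    aeval (fun p : σ' => C (if p.2.1 = (0 : Fin 2) then (2:ℂ) else 2⁻¹) * X p) g := by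
  have h : (fun p : σ' => ∑ i' : Fin 2, ∑ j' : Fin 2, ∑ k' : Fin 2,
      MvPolynomial.C ((1 : Matrix.SpecialLinearGroup (Fin 2) ℂ).val i' p.1 * T.val j' p.2.1
        * (1 : Matrix.SpecialLinearGroup (Fin 2) ℂ).val k' p.2.2) *
        MvPolynomial.X (R := ℂ) (i', j', k'))
      = fun p : σ' => C (if p.2.1 = (0 : Fin 2) then (2:ℂ) else 2⁻¹) * X p := by
    funext p; obtain ⟨i, j, k⟩ := p
    fin_cases i <;> fin_cases j <;> fin_cases k <;>
      norm_num [T, Fin.sum_univ_two, Matrix.one_apply]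
  rw [act, h]

lemma act_T_trd (g : P) : act 1 1 T g =
    aeval (fun p : σ' => C (if p.2.2 = (0 : Fin 2) then (2:ℂ) else 2⁻¹) * X p) g := by
  have h : (fun p : σ' => ∑ i' : Fin 2, ∑ j' : Fin 2, ∑ k' : Fin 2,
      MvPolynomial.C ((1 : Matrix.SpecialLinearGroup (Fin 2) ℂ).val i' p.1
        * (1 : Matrix.SpecialLinearGroup (Fin 2) ℂ).val j' p.2.1 * T.val k' p.2.2) *
        MvPolynomial.X (R := ℂ) (i', j', k'))
      = fun p : σ' => C (if p.2.2 = (0 : Fin 2) then (2:ℂ) else 2⁻¹) * X p := by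
    funext p; obtain ⟨i, j, k⟩ := p
    fin_cases i <;> fin_cases j <;> fin_cases k <;>
      norm_num [T, Fin.sum_univ_two, Matrix.one_apply]
  rw [act, h]

lemma two_pow_inj {A B : ℕ} (h : (2:ℂ) ^ A * 2⁻¹ ^ B = 1) : A = B := by
  rw [inv_pow, mul_inv_eq_one₀ (pow_ne_zero _ two_ne_zero)] at h
  have h2 : ((2:ℕ):ℂ) ^ A = ((2:ℕ):ℂ) ^ B := by exact_mod_cast h
  rw [← Nat.cast_pow, ← Nat.cast_pow, Nat.cast_inj] at h2
  exact Nat.pow_right_injective (le_refl 2) h2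

lemma balance_fst (f : P) (hinv : ∀ A B C : Matrix.SpecialLinearGroup (Fin 2) ℂ, act A B C f = f)
    (n : σ' →₀ ℕ) (hc : coeff n f ≠ 0) :
    n (0,0,0) + n (0,0,1) + n (0,1,0) + n (0,1,1)
      = n (1,0,0) + n (1,0,1) + n (1,1,0) + n (1,1,1) := by
  have h2 := congrArg (coeff n) ((act_T_fst f).symm.trans (hinv T 1 1))
  rw [scale_aeval] at h2
  have hprod : (∏ p : σ', (if p.1 = (0 : Fin 2) then (2:ℂ) else 2⁻¹) ^ n p)
      = 2 ^ (n (0,0,0) + n (0,0,1) + n (0,1,0) + n (0,1,1))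
        * 2⁻¹ ^ (n (1,0,0) + n (1,0,1) + n (1,1,0) + n (1,1,1)) := by
    simp only [Fintype.prod_prod_type, Fin.prod_univ_two]
    norm_num [pow_add]
    ring
  rw [hprod] at h2
  exact two_pow_inj (mul_right_cancel₀ hc (h2.trans (one_mul _).symm))

lemma balance_snd (f : P) (hinv : ∀ A B C : Matrix.SpecialLinearGroup (Fin 2) ℂ, act A B C f = f)
    (n : σ' →₀ ℕ) (hc : coeff n f ≠ 0) :
    n (0,0,0) + n (0,0,1) + n (1,0,0) + n (1,0,1)
      = n (0,1,0) + n (0,1,1) + n (1,1,0) + n (1,1,1) := by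
  have h2 := congrArg (coeff n) ((act_T_snd f).symm.trans (hinv 1 T 1))
  rw [scale_aeval] at h2
  have hprod : (∏ p : σ', (if p.2.1 = (0 : Fin 2) then (2:ℂ) else 2⁻¹) ^ n p)
      = 2 ^ (n (0,0,0) + n (0,0,1) + n (1,0,0) + n (1,0,1))
        * 2⁻¹ ^ (n (0,1,0) + n (0,1,1) + n (1,1,0) + n (1,1,1)) := by
    simp only [Fintype.prod_prod_type, Fin.prod_univ_two]
    norm_num [pow_add]
    ring
  rw [hprod] at h2
  exact two_pow_inj (mul_right_cancel₀ hc (h2.trans (one_mul _).symm))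

lemma balance_trd (f : P) (hinv : ∀ A B C : Matrix.SpecialLinearGroup (Fin 2) ℂ, act A B C f = f)
    (n : σ' →₀ ℕ) (hc : coeff n f ≠ 0) :
    n (0,0,0) + n (0,1,0) + n (1,0,0) + n (1,1,0)
      = n (0,0,1) + n (0,1,1) + n (1,0,1) + n (1,1,1) := by
  have h2 := congrArg (coeff n) ((act_T_trd f).symm.trans (hinv 1 1 T))
  rw [scale_aeval] at h2
  have hprod : (∏ p : σ', (if p.2.2 = (0 : Fin 2) then (2:ℂ) else 2⁻¹) ^ n p)
      = 2 ^ (n (0,0,0) + n (0,1,0) + n (1,0,0) + n (1,1,0))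
        * 2⁻¹ ^ (n (0,0,1) + n (0,1,1) + n (1,0,1) + n (1,1,1)) := by
    simp only [Fintype.prod_prod_type, Fin.prod_univ_two]
    norm_num [pow_add]
    ring
  rw [hprod] at h2
  exact two_pow_inj (mul_right_cancel₀ hc (h2.trans (one_mul _).symm))
def e (p : σ') (k : ℕ) : σ' →₀ ℕ := Finsupp.single p k

def M1 : σ' →₀ ℕ := e (0,0,0) 2 + e (1,1,1) 2
def M2 : σ' →₀ ℕ := e (0,0,0) 1 + e (0,0,1) 1 + e (1,1,0) 1 + e (1,1,1) 1
def M3 : σ' →₀ ℕ := e (0,0,0) 1 + e (0,1,0) 1 + e (1,0,1) 1 + e (1,1,1) 1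
def M4 : σ' →₀ ℕ := e (0,0,0) 1 + e (0,1,1) 1 + e (1,0,0) 1 + e (1,1,1) 1
def M5 : σ' →₀ ℕ := e (0,0,0) 1 + e (0,1,1) 1 + e (1,0,1) 1 + e (1,1,0) 1
def M6 : σ' →₀ ℕ := e (0,0,1) 2 + e (1,1,0) 2
def M7 : σ' →₀ ℕ := e (0,0,1) 1 + e (0,1,0) 1 + e (1,0,0) 1 + e (1,1,1) 1
def M8 : σ' →₀ ℕ := e (0,0,1) 1 + e (0,1,0) 1 + e (1,0,1) 1 + e (1,1,0) 1
def M9 : σ' →₀ ℕ := e (0,0,1) 1 + e (0,1,1) 1 + e (1,0,0) 1 + e (1,1,0) 1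
def M10 : σ' →₀ ℕ := e (0,1,0) 2 + e (1,0,1) 2
def M11 : σ' →₀ ℕ := e (0,1,0) 1 + e (0,1,1) 1 + e (1,0,0) 1 + e (1,0,1) 1
def M12 : σ' →₀ ℕ := e (0,1,1) 2 + e (1,0,0) 2

set_option maxHeartbeats 4000000 in
lemma solve448 (a b c d e2 f2 g2 h4 : ℕ)
    (hd : a + b + c + d + e2 + f2 + g2 + h4 = 4)
    (h1 : a + b + c + d = e2 + f2 + g2 + h4)
    (h2 : a + b + e2 + f2 = c + d + g2 + h4)
    (h3 : a + c + e2 + g2 = b + d + f2 + h4) :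
    (a = 2 ∧ b = 0 ∧ c = 0 ∧ d = 0 ∧ e2 = 0 ∧ f2 = 0 ∧ g2 = 0 ∧ h4 = 2)
      ∨ (a = 1 ∧ b = 1 ∧ c = 0 ∧ d = 0 ∧ e2 = 0 ∧ f2 = 0 ∧ g2 = 1 ∧ h4 = 1)
      ∨ (a = 1 ∧ b = 0 ∧ c = 1 ∧ d = 0 ∧ e2 = 0 ∧ f2 = 1 ∧ g2 = 0 ∧ h4 = 1)
      ∨ (a = 1 ∧ b = 0 ∧ c = 0 ∧ d = 1 ∧ e2 = 1 ∧ f2 = 0 ∧ g2 = 0 ∧ h4 = 1)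
      ∨ (a = 1 ∧ b = 0 ∧ c = 0 ∧ d = 1 ∧ e2 = 0 ∧ f2 = 1 ∧ g2 = 1 ∧ h4 = 0)
      ∨ (a = 0 ∧ b = 2 ∧ c = 0 ∧ d = 0 ∧ e2 = 0 ∧ f2 = 0 ∧ g2 = 2 ∧ h4 = 0)
      ∨ (a = 0 ∧ b = 1 ∧ c = 1 ∧ d = 0 ∧ e2 = 1 ∧ f2 = 0 ∧ g2 = 0 ∧ h4 = 1)
      ∨ (a = 0 ∧ b = 1 ∧ c = 1 ∧ d = 0 ∧ e2 = 0 ∧ f2 = 1 ∧ g2 = 1 ∧ h4 = 0)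
      ∨ (a = 0 ∧ b = 1 ∧ c = 0 ∧ d = 1 ∧ e2 = 1 ∧ f2 = 0 ∧ g2 = 1 ∧ h4 = 0)
      ∨ (a = 0 ∧ b = 0 ∧ c = 2 ∧ d = 0 ∧ e2 = 0 ∧ f2 = 2 ∧ g2 = 0 ∧ h4 = 0)
      ∨ (a = 0 ∧ b = 0 ∧ c = 1 ∧ d = 1 ∧ e2 = 1 ∧ f2 = 1 ∧ g2 = 0 ∧ h4 = 0)
      ∨ (a = 0 ∧ b = 0 ∧ c = 0 ∧ d = 2 ∧ e2 = 2 ∧ f2 = 0 ∧ g2 = 0 ∧ h4 = 0) := by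
  rcases (show a = 0 ∨ a = 1 ∨ a = 2 by omega) with rfl | rfl | rfl <;>
    rcases (show b = 0 ∨ b = 1 ∨ b = 2 by omega) with rfl | rfl | rfl <;>
    rcases (show c = 0 ∨ c = 1 ∨ c = 2 by omega) with rfl | rfl | rfl <;>
    rcases (show e2 = 0 ∨ e2 = 1 ∨ e2 = 2 by omega) with rfl | rfl | rfl <;>
    first
      | (refine Or.inl ⟨rfl, rfl, rfl, ?_, rfl, ?_, ?_, ?_⟩ <;> omega)
      | (refine Or.inr (Or.inl ⟨rfl, rfl, rfl, ?_, rfl, ?_, ?_, ?_⟩) <;> omega)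
      | (refine Or.inr (Or.inr (Or.inl ⟨rfl, rfl, rfl, ?_, rfl, ?_, ?_, ?_⟩)) <;> omega)
      | (refine Or.inr (Or.inr (Or.inr (Or.inl ⟨rfl, rfl, rfl, ?_, rfl, ?_, ?_, ?_⟩))) <;> omega)
      | (refine Or.inr (Or.inr (Or.inr (Or.inr (Or.inl ⟨rfl, rfl, rfl, ?_, rfl, ?_, ?_, ?_⟩)))) <;> omega)
      | (refine Or.inr (Or.inr (Or.inr (Or.inr (Or.inr (Or.inl ⟨rfl, rfl, rfl, ?_, rfl, ?_, ?_, ?_⟩))))) <;> omega)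
      | (refine Or.inr (Or.inr (Or.inr (Or.inr (Or.inr (Or.inr (Or.inl ⟨rfl, rfl, rfl, ?_, rfl, ?_, ?_, ?_⟩)))))) <;> omega)
      | (refine Or.inr (Or.inr (Or.inr (Or.inr (Or.inr (Or.inr (Or.inr (Or.inl ⟨rfl, rfl, rfl, ?_, rfl, ?_, ?_, ?_⟩))))))) <;> omega)
      | (refine Or.inr (Or.inr (Or.inr (Or.inr (Or.inr (Or.inr (Or.inr (Or.inr (Or.inl ⟨rfl, rfl, rfl, ?_, rfl, ?_, ?_, ?_⟩)))))))) <;> omega)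
      | (refine Or.inr (Or.inr (Or.inr (Or.inr (Or.inr (Or.inr (Or.inr (Or.inr (Or.inr (Or.inl ⟨rfl, rfl, rfl, ?_, rfl, ?_, ?_, ?_⟩))))))))) <;> omega)
      | (refine Or.inr (Or.inr (Or.inr (Or.inr (Or.inr (Or.inr (Or.inr (Or.inr (Or.inr (Or.inr (Or.inl ⟨rfl, rfl, rfl, ?_, rfl, ?_, ?_, ?_⟩)))))))))) <;> omega)
      | (refine Or.inr (Or.inr (Or.inr (Or.inr (Or.inr (Or.inr (Or.inr (Or.inr (Or.inr (Or.inr (Or.inr (⟨rfl, rfl, rfl, ?_, rfl, ?_, ?_, ?_⟩))))))))))) <;> omega)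
      | (exfalso; omega)

lemma classify (n : σ' →₀ ℕ)
    (hd : n (0,0,0) + n (0,0,1) + n (0,1,0) + n (0,1,1) + n (1,0,0) + n (1,0,1) + n (1,1,0) + n (1,1,1) = 4)
    (h1 : n (0,0,0) + n (0,0,1) + n (0,1,0) + n (0,1,1) = n (1,0,0) + n (1,0,1) + n (1,1,0) + n (1,1,1))
    (h2 : n (0,0,0) + n (0,0,1) + n (1,0,0) + n (1,0,1) = n (0,1,0) + n (0,1,1) + n (1,1,0) + n (1,1,1))
    (h3 : n (0,0,0) + n (0,1,0) + n (1,0,0) + n (1,1,0) = n (0,0,1) + n (0,1,1) + n (1,0,1) + n (1,1,1)) :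
    n = M1 ∨ n = M2 ∨ n = M3 ∨ n = M4 ∨ n = M5 ∨ n = M6 ∨ n = M7 ∨ n = M8 ∨ n = M9 ∨ n = M10 ∨ n = M11 ∨ n = M12 := by
  have key := solve448 (n (0,0,0)) (n (0,0,1)) (n (0,1,0)) (n (0,1,1))
    (n (1,0,0)) (n (1,0,1)) (n (1,1,0)) (n (1,1,1)) hd h1 h2 h3
  rcases key with h|h|h|h|h|h|h|h|h|h|h|h <;>
      obtain ⟨c000, c001, c010, c011, c100, c101, c110, c111⟩ := h
  · left
    refine Finsupp.ext fun p => ?_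
    fin_cases p <;>
      simp only [M1, e, Finsupp.coe_add, Pi.add_apply, Finsupp.single_apply,
        c000, c001, c010, c011, c100, c101, c110, c111] <;>
      norm_num [Prod.ext_iff] <;> assumption
  · right; left
    refine Finsupp.ext fun p => ?_
    fin_cases p <;>
      simp only [M2, e, Finsupp.coe_add, Pi.add_apply, Finsupp.single_apply,
        c000, c001, c010, c011, c100, c101, c110, c111] <;>
      norm_num [Prod.ext_iff] <;> assumption
  · right; right; left
    refine Finsupp.ext fun p => ?_
    fin_cases p <;>
      simp only [M3, e, Finsupp.coe_add, Pi.add_apply, Finsupp.single_apply,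
        c000, c001, c010, c011, c100, c101, c110, c111] <;>
      norm_num [Prod.ext_iff] <;> assumption
  · right; right; right; left
    refine Finsupp.ext fun p => ?_
    fin_cases p <;>
      simp only [M4, e, Finsupp.coe_add, Pi.add_apply, Finsupp.single_apply,
        c000, c001, c010, c011, c100, c101, c110, c111] <;>
      norm_num [Prod.ext_iff] <;> assumption
  · right; right; right; right; left
    refine Finsupp.ext fun p => ?_
    fin_cases p <;>
      simp only [M5, e, Finsupp.coe_add, Pi.add_apply, Finsupp.single_apply,
        c000, c001, c010, c011, c100, c101, c110, c111] <;>
      norm_num [Prod.ext_iff] <;> assumption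
  · right; right; right; right; right; left
    refine Finsupp.ext fun p => ?_
    fin_cases p <;>
      simp only [M6, e, Finsupp.coe_add, Pi.add_apply, Finsupp.single_apply,
        c000, c001, c010, c011, c100, c101, c110, c111] <;>
      norm_num [Prod.ext_iff] <;> assumption
  · right; right; right; right; right; right; left
    refine Finsupp.ext fun p => ?_
    fin_cases p <;>
      simp only [M7, e, Finsupp.coe_add, Pi.add_apply, Finsupp.single_apply,
        c000, c001, c010, c011, c100, c101, c110, c111] <;>
      norm_num [Prod.ext_iff] <;> assumption
  · right; right; right; right; right; right; right; left
    refine Finsupp.ext fun p => ?_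
    fin_cases p <;>
      simp only [M8, e, Finsupp.coe_add, Pi.add_apply, Finsupp.single_apply,
        c000, c001, c010, c011, c100, c101, c110, c111] <;>
      norm_num [Prod.ext_iff] <;> assumption
  · right; right; right; right; right; right; right; right; left
    refine Finsupp.ext fun p => ?_
    fin_cases p <;>
      simp only [M9, e, Finsupp.coe_add, Pi.add_apply, Finsupp.single_apply,
        c000, c001, c010, c011, c100, c101, c110, c111] <;>
      norm_num [Prod.ext_iff] <;> assumption
  · right; right; right; right; right; right; right; right; right; left
    refine Finsupp.ext fun p => ?_
    fin_cases p <;>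
      simp only [M10, e, Finsupp.coe_add, Pi.add_apply, Finsupp.single_apply,
        c000, c001, c010, c011, c100, c101, c110, c111] <;>
      norm_num [Prod.ext_iff] <;> assumption
  · right; right; right; right; right; right; right; right; right; right; left
    refine Finsupp.ext fun p => ?_
    fin_cases p <;>
      simp only [M11, e, Finsupp.coe_add, Pi.add_apply, Finsupp.single_apply,
        c000, c001, c010, c011, c100, c101, c110, c111] <;>
      norm_num [Prod.ext_iff] <;> assumption
  · right; right; right; right; right; right; right; right; right; right; right
    refine Finsupp.ext fun p => ?_
    fin_cases p <;>
      simp only [M12, e, Finsupp.coe_add, Pi.add_apply, Finsupp.single_apply,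
        c000, c001, c010, c011, c100, c101, c110, c111] <;>
      norm_num [Prod.ext_iff] <;> assumption
theorem Mne_1_2 : M1 ≠ M2 := by
  intro h
  have h2 := DFunLike.congr_fun h ((0:Fin 2),(0:Fin 2),(0:Fin 2))
  simp [M1, M2, e, Finsupp.single_apply, Prod.ext_iff] at h2
theorem Mne_1_3 : M1 ≠ M3 := by
  intro h
  have h2 := DFunLike.congr_fun h ((0:Fin 2),(0:Fin 2),(0:Fin 2))
  simp [M1, M3, e, Finsupp.single_apply, Prod.ext_iff] at h2
theorem Mne_1_4 : M1 ≠ M4 := by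
  intro h
  have h2 := DFunLike.congr_fun h ((0:Fin 2),(0:Fin 2),(0:Fin 2))
  simp [M1, M4, e, Finsupp.single_apply, Prod.ext_iff] at h2
theorem Mne_1_5 : M1 ≠ M5 := by
  intro h
  have h2 := DFunLike.congr_fun h ((0:Fin 2),(0:Fin 2),(0:Fin 2))
  simp [M1, M5, e, Finsupp.single_apply, Prod.ext_iff] at h2
theorem Mne_1_6 : M1 ≠ M6 := by
  intro h
  have h2 := DFunLike.congr_fun h ((0:Fin 2),(0:Fin 2),(0:Fin 2))
  simp [M1, M6, e, Finsupp.single_apply, Prod.ext_iff] at h2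
theorem Mne_1_7 : M1 ≠ M7 := by
  intro h
  have h2 := DFunLike.congr_fun h ((0:Fin 2),(0:Fin 2),(0:Fin 2))
  simp [M1, M7, e, Finsupp.single_apply, Prod.ext_iff] at h2
theorem Mne_1_8 : M1 ≠ M8 := by
  intro h
  have h2 := DFunLike.congr_fun h ((0:Fin 2),(0:Fin 2),(0:Fin 2))
  simp [M1, M8, e, Finsupp.single_apply, Prod.ext_iff] at h2
theorem Mne_1_9 : M1 ≠ M9 := by
  intro h
  have h2 := DFunLike.congr_fun h ((0:Fin 2),(0:Fin 2),(0:Fin 2))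
  simp [M1, M9, e, Finsupp.single_apply, Prod.ext_iff] at h2
theorem Mne_1_10 : M1 ≠ M10 := by
  intro h
  have h2 := DFunLike.congr_fun h ((0:Fin 2),(0:Fin 2),(0:Fin 2))
  simp [M1, M10, e, Finsupp.single_apply, Prod.ext_iff] at h2
theorem Mne_1_11 : M1 ≠ M11 := by
  intro h
  have h2 := DFunLike.congr_fun h ((0:Fin 2),(0:Fin 2),(0:Fin 2))
  simp [M1, M11, e, Finsupp.single_apply, Prod.ext_iff] at h2
theorem Mne_1_12 : M1 ≠ M12 := by
  intro h
  have h2 := DFunLike.congr_fun h ((0:Fin 2),(0:Fin 2),(0:Fin 2))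
  simp [M1, M12, e, Finsupp.single_apply, Prod.ext_iff] at h2
theorem Mne_2_1 : M2 ≠ M1 := by
  intro h
  have h2 := DFunLike.congr_fun h ((0:Fin 2),(0:Fin 2),(0:Fin 2))
  simp [M2, M1, e, Finsupp.single_apply, Prod.ext_iff] at h2
theorem Mne_2_3 : M2 ≠ M3 := by
  intro h
  have h2 := DFunLike.congr_fun h ((0:Fin 2),(0:Fin 2),(1:Fin 2))
  simp [M2, M3, e, Finsupp.single_apply, Prod.ext_iff] at h2
theorem Mne_2_4 : M2 ≠ M4 := by
  intro h
  have h2 := DFunLike.congr_fun h ((0:Fin 2),(0:Fin 2),(1:Fin 2))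
  simp [M2, M4, e, Finsupp.single_apply, Prod.ext_iff] at h2
theorem Mne_2_5 : M2 ≠ M5 := by
  intro h
  have h2 := DFunLike.congr_fun h ((0:Fin 2),(0:Fin 2),(1:Fin 2))
  simp [M2, M5, e, Finsupp.single_apply, Prod.ext_iff] at h2
theorem Mne_2_6 : M2 ≠ M6 := by
  intro h
  have h2 := DFunLike.congr_fun h ((0:Fin 2),(0:Fin 2),(0:Fin 2))
  simp [M2, M6, e, Finsupp.single_apply, Prod.ext_iff] at h2
theorem Mne_2_7 : M2 ≠ M7 := by
  intro h
  have h2 := DFunLike.congr_fun h ((0:Fin 2),(0:Fin 2),(0:Fin 2))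
  simp [M2, M7, e, Finsupp.single_apply, Prod.ext_iff] at h2
theorem Mne_2_8 : M2 ≠ M8 := by
  intro h
  have h2 := DFunLike.congr_fun h ((0:Fin 2),(0:Fin 2),(0:Fin 2))
  simp [M2, M8, e, Finsupp.single_apply, Prod.ext_iff] at h2
theorem Mne_2_9 : M2 ≠ M9 := by
  intro h
  have h2 := DFunLike.congr_fun h ((0:Fin 2),(0:Fin 2),(0:Fin 2))
  simp [M2, M9, e, Finsupp.single_apply, Prod.ext_iff] at h2
theorem Mne_2_10 : M2 ≠ M10 := by
  intro h
  have h2 := DFunLike.congr_fun h ((0:Fin 2),(0:Fin 2),(0:Fin 2))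
  simp [M2, M10, e, Finsupp.single_apply, Prod.ext_iff] at h2
theorem Mne_2_11 : M2 ≠ M11 := by
  intro h
  have h2 := DFunLike.congr_fun h ((0:Fin 2),(0:Fin 2),(0:Fin 2))
  simp [M2, M11, e, Finsupp.single_apply, Prod.ext_iff] at h2
theorem Mne_2_12 : M2 ≠ M12 := by
  intro h
  have h2 := DFunLike.congr_fun h ((0:Fin 2),(0:Fin 2),(0:Fin 2))
  simp [M2, M12, e, Finsupp.single_apply, Prod.ext_iff] at h2
theorem Mne_3_1 : M3 ≠ M1 := by
  intro h
  have h2 := DFunLike.congr_fun h ((0:Fin 2),(0:Fin 2),(0:Fin 2))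
  simp [M3, M1, e, Finsupp.single_apply, Prod.ext_iff] at h2
theorem Mne_3_2 : M3 ≠ M2 := by
  intro h
  have h2 := DFunLike.congr_fun h ((0:Fin 2),(0:Fin 2),(1:Fin 2))
  simp [M3, M2, e, Finsupp.single_apply, Prod.ext_iff] at h2
theorem Mne_3_4 : M3 ≠ M4 := by
  intro h
  have h2 := DFunLike.congr_fun h ((0:Fin 2),(1:Fin 2),(0:Fin 2))
  simp [M3, M4, e, Finsupp.single_apply, Prod.ext_iff] at h2
theorem Mne_3_5 : M3 ≠ M5 := by
  intro h
  have h2 := DFunLike.congr_fun h ((0:Fin 2),(1:Fin 2),(0:Fin 2))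
  simp [M3, M5, e, Finsupp.single_apply, Prod.ext_iff] at h2
theorem Mne_3_6 : M3 ≠ M6 := by
  intro h
  have h2 := DFunLike.congr_fun h ((0:Fin 2),(0:Fin 2),(0:Fin 2))
  simp [M3, M6, e, Finsupp.single_apply, Prod.ext_iff] at h2
theorem Mne_3_7 : M3 ≠ M7 := by
  intro h
  have h2 := DFunLike.congr_fun h ((0:Fin 2),(0:Fin 2),(0:Fin 2))
  simp [M3, M7, e, Finsupp.single_apply, Prod.ext_iff] at h2
theorem Mne_3_8 : M3 ≠ M8 := by
  intro h
  have h2 := DFunLike.congr_fun h ((0:Fin 2),(0:Fin 2),(0:Fin 2))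
  simp [M3, M8, e, Finsupp.single_apply, Prod.ext_iff] at h2
theorem Mne_3_9 : M3 ≠ M9 := by
  intro h
  have h2 := DFunLike.congr_fun h ((0:Fin 2),(0:Fin 2),(0:Fin 2))
  simp [M3, M9, e, Finsupp.single_apply, Prod.ext_iff] at h2
theorem Mne_3_10 : M3 ≠ M10 := by
  intro h
  have h2 := DFunLike.congr_fun h ((0:Fin 2),(0:Fin 2),(0:Fin 2))
  simp [M3, M10, e, Finsupp.single_apply, Prod.ext_iff] at h2
theorem Mne_3_11 : M3 ≠ M11 := by
  intro h
  have h2 := DFunLike.congr_fun h ((0:Fin 2),(0:Fin 2),(0:Fin 2))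
  simp [M3, M11, e, Finsupp.single_apply, Prod.ext_iff] at h2
theorem Mne_3_12 : M3 ≠ M12 := by
  intro h
  have h2 := DFunLike.congr_fun h ((0:Fin 2),(0:Fin 2),(0:Fin 2))
  simp [M3, M12, e, Finsupp.single_apply, Prod.ext_iff] at h2
theorem Mne_4_1 : M4 ≠ M1 := by
  intro h
  have h2 := DFunLike.congr_fun h ((0:Fin 2),(0:Fin 2),(0:Fin 2))
  simp [M4, M1, e, Finsupp.single_apply, Prod.ext_iff] at h2
theorem Mne_4_2 : M4 ≠ M2 := by
  intro h
  have h2 := DFunLike.congr_fun h ((0:Fin 2),(0:Fin 2),(1:Fin 2))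
  simp [M4, M2, e, Finsupp.single_apply, Prod.ext_iff] at h2
theorem Mne_4_3 : M4 ≠ M3 := by
  intro h
  have h2 := DFunLike.congr_fun h ((0:Fin 2),(1:Fin 2),(0:Fin 2))
  simp [M4, M3, e, Finsupp.single_apply, Prod.ext_iff] at h2
theorem Mne_4_5 : M4 ≠ M5 := by
  intro h
  have h2 := DFunLike.congr_fun h ((1:Fin 2),(0:Fin 2),(0:Fin 2))
  simp [M4, M5, e, Finsupp.single_apply, Prod.ext_iff] at h2
theorem Mne_4_6 : M4 ≠ M6 := by
  intro h
  have h2 := DFunLike.congr_fun h ((0:Fin 2),(0:Fin 2),(0:Fin 2))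
  simp [M4, M6, e, Finsupp.single_apply, Prod.ext_iff] at h2
theorem Mne_4_7 : M4 ≠ M7 := by
  intro h
  have h2 := DFunLike.congr_fun h ((0:Fin 2),(0:Fin 2),(0:Fin 2))
  simp [M4, M7, e, Finsupp.single_apply, Prod.ext_iff] at h2
theorem Mne_4_8 : M4 ≠ M8 := by
  intro h
  have h2 := DFunLike.congr_fun h ((0:Fin 2),(0:Fin 2),(0:Fin 2))
  simp [M4, M8, e, Finsupp.single_apply, Prod.ext_iff] at h2
theorem Mne_4_9 : M4 ≠ M9 := by
  intro h
  have h2 := DFunLike.congr_fun h ((0:Fin 2),(0:Fin 2),(0:Fin 2))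
  simp [M4, M9, e, Finsupp.single_apply, Prod.ext_iff] at h2
theorem Mne_4_10 : M4 ≠ M10 := by
  intro h
  have h2 := DFunLike.congr_fun h ((0:Fin 2),(0:Fin 2),(0:Fin 2))
  simp [M4, M10, e, Finsupp.single_apply, Prod.ext_iff] at h2
theorem Mne_4_11 : M4 ≠ M11 := by
  intro h
  have h2 := DFunLike.congr_fun h ((0:Fin 2),(0:Fin 2),(0:Fin 2))
  simp [M4, M11, e, Finsupp.single_apply, Prod.ext_iff] at h2
theorem Mne_4_12 : M4 ≠ M12 := by
  intro h
  have h2 := DFunLike.congr_fun h ((0:Fin 2),(0:Fin 2),(0:Fin 2))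
  simp [M4, M12, e, Finsupp.single_apply, Prod.ext_iff] at h2
theorem Mne_5_1 : M5 ≠ M1 := by
  intro h
  have h2 := DFunLike.congr_fun h ((0:Fin 2),(0:Fin 2),(0:Fin 2))
  simp [M5, M1, e, Finsupp.single_apply, Prod.ext_iff] at h2
theorem Mne_5_2 : M5 ≠ M2 := by
  intro h
  have h2 := DFunLike.congr_fun h ((0:Fin 2),(0:Fin 2),(1:Fin 2))
  simp [M5, M2, e, Finsupp.single_apply, Prod.ext_iff] at h2
theorem Mne_5_3 : M5 ≠ M3 := by
  intro h
  have h2 := DFunLike.congr_fun h ((0:Fin 2),(1:Fin 2),(0:Fin 2))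
  simp [M5, M3, e, Finsupp.single_apply, Prod.ext_iff] at h2
theorem Mne_5_4 : M5 ≠ M4 := by
  intro h
  have h2 := DFunLike.congr_fun h ((1:Fin 2),(0:Fin 2),(0:Fin 2))
  simp [M5, M4, e, Finsupp.single_apply, Prod.ext_iff] at h2
theorem Mne_5_6 : M5 ≠ M6 := by
  intro h
  have h2 := DFunLike.congr_fun h ((0:Fin 2),(0:Fin 2),(0:Fin 2))
  simp [M5, M6, e, Finsupp.single_apply, Prod.ext_iff] at h2
theorem Mne_5_7 : M5 ≠ M7 := by
  intro h
  have h2 := DFunLike.congr_fun h ((0:Fin 2),(0:Fin 2),(0:Fin 2))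
  simp [M5, M7, e, Finsupp.single_apply, Prod.ext_iff] at h2
theorem Mne_5_8 : M5 ≠ M8 := by
  intro h
  have h2 := DFunLike.congr_fun h ((0:Fin 2),(0:Fin 2),(0:Fin 2))
  simp [M5, M8, e, Finsupp.single_apply, Prod.ext_iff] at h2
theorem Mne_5_9 : M5 ≠ M9 := by
  intro h
  have h2 := DFunLike.congr_fun h ((0:Fin 2),(0:Fin 2),(0:Fin 2))
  simp [M5, M9, e, Finsupp.single_apply, Prod.ext_iff] at h2
theorem Mne_5_10 : M5 ≠ M10 := by
  intro h
  have h2 := DFunLike.congr_fun h ((0:Fin 2),(0:Fin 2),(0:Fin 2))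
  simp [M5, M10, e, Finsupp.single_apply, Prod.ext_iff] at h2
theorem Mne_5_11 : M5 ≠ M11 := by
  intro h
  have h2 := DFunLike.congr_fun h ((0:Fin 2),(0:Fin 2),(0:Fin 2))
  simp [M5, M11, e, Finsupp.single_apply, Prod.ext_iff] at h2
theorem Mne_5_12 : M5 ≠ M12 := by
  intro h
  have h2 := DFunLike.congr_fun h ((0:Fin 2),(0:Fin 2),(0:Fin 2))
  simp [M5, M12, e, Finsupp.single_apply, Prod.ext_iff] at h2
theorem Mne_6_1 : M6 ≠ M1 := by
  intro h
  have h2 := DFunLike.congr_fun h ((0:Fin 2),(0:Fin 2),(0:Fin 2))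
  simp [M6, M1, e, Finsupp.single_apply, Prod.ext_iff] at h2
theorem Mne_6_2 : M6 ≠ M2 := by
  intro h
  have h2 := DFunLike.congr_fun h ((0:Fin 2),(0:Fin 2),(0:Fin 2))
  simp [M6, M2, e, Finsupp.single_apply, Prod.ext_iff] at h2
theorem Mne_6_3 : M6 ≠ M3 := by
  intro h
  have h2 := DFunLike.congr_fun h ((0:Fin 2),(0:Fin 2),(0:Fin 2))
  simp [M6, M3, e, Finsupp.single_apply, Prod.ext_iff] at h2
theorem Mne_6_4 : M6 ≠ M4 := by
  intro h
  have h2 := DFunLike.congr_fun h ((0:Fin 2),(0:Fin 2),(0:Fin 2))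
  simp [M6, M4, e, Finsupp.single_apply, Prod.ext_iff] at h2
theorem Mne_6_5 : M6 ≠ M5 := by
  intro h
  have h2 := DFunLike.congr_fun h ((0:Fin 2),(0:Fin 2),(0:Fin 2))
  simp [M6, M5, e, Finsupp.single_apply, Prod.ext_iff] at h2
theorem Mne_6_7 : M6 ≠ M7 := by
  intro h
  have h2 := DFunLike.congr_fun h ((0:Fin 2),(0:Fin 2),(1:Fin 2))
  simp [M6, M7, e, Finsupp.single_apply, Prod.ext_iff] at h2
theorem Mne_6_8 : M6 ≠ M8 := by
  intro h
  have h2 := DFunLike.congr_fun h ((0:Fin 2),(0:Fin 2),(1:Fin 2))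
  simp [M6, M8, e, Finsupp.single_apply, Prod.ext_iff] at h2
theorem Mne_6_9 : M6 ≠ M9 := by
  intro h
  have h2 := DFunLike.congr_fun h ((0:Fin 2),(0:Fin 2),(1:Fin 2))
  simp [M6, M9, e, Finsupp.single_apply, Prod.ext_iff] at h2
theorem Mne_6_10 : M6 ≠ M10 := by
  intro h
  have h2 := DFunLike.congr_fun h ((0:Fin 2),(0:Fin 2),(1:Fin 2))
  simp [M6, M10, e, Finsupp.single_apply, Prod.ext_iff] at h2
theorem Mne_6_11 : M6 ≠ M11 := by
  intro h
  have h2 := DFunLike.congr_fun h ((0:Fin 2),(0:Fin 2),(1:Fin 2))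
  simp [M6, M11, e, Finsupp.single_apply, Prod.ext_iff] at h2
theorem Mne_6_12 : M6 ≠ M12 := by
  intro h
  have h2 := DFunLike.congr_fun h ((0:Fin 2),(0:Fin 2),(1:Fin 2))
  simp [M6, M12, e, Finsupp.single_apply, Prod.ext_iff] at h2
theorem Mne_7_1 : M7 ≠ M1 := by
  intro h
  have h2 := DFunLike.congr_fun h ((0:Fin 2),(0:Fin 2),(0:Fin 2))
  simp [M7, M1, e, Finsupp.single_apply, Prod.ext_iff] at h2
theorem Mne_7_2 : M7 ≠ M2 := by
  intro h
  have h2 := DFunLike.congr_fun h ((0:Fin 2),(0:Fin 2),(0:Fin 2))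
  simp [M7, M2, e, Finsupp.single_apply, Prod.ext_iff] at h2
theorem Mne_7_3 : M7 ≠ M3 := by
  intro h
  have h2 := DFunLike.congr_fun h ((0:Fin 2),(0:Fin 2),(0:Fin 2))
  simp [M7, M3, e, Finsupp.single_apply, Prod.ext_iff] at h2
theorem Mne_7_4 : M7 ≠ M4 := by
  intro h
  have h2 := DFunLike.congr_fun h ((0:Fin 2),(0:Fin 2),(0:Fin 2))
  simp [M7, M4, e, Finsupp.single_apply, Prod.ext_iff] at h2
theorem Mne_7_5 : M7 ≠ M5 := by
  intro h
  have h2 := DFunLike.congr_fun h ((0:Fin 2),(0:Fin 2),(0:Fin 2))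
  simp [M7, M5, e, Finsupp.single_apply, Prod.ext_iff] at h2
theorem Mne_7_6 : M7 ≠ M6 := by
  intro h
  have h2 := DFunLike.congr_fun h ((0:Fin 2),(0:Fin 2),(1:Fin 2))
  simp [M7, M6, e, Finsupp.single_apply, Prod.ext_iff] at h2
theorem Mne_7_8 : M7 ≠ M8 := by
  intro h
  have h2 := DFunLike.congr_fun h ((1:Fin 2),(0:Fin 2),(0:Fin 2))
  simp [M7, M8, e, Finsupp.single_apply, Prod.ext_iff] at h2
theorem Mne_7_9 : M7 ≠ M9 := by
  intro h
  have h2 := DFunLike.congr_fun h ((0:Fin 2),(1:Fin 2),(0:Fin 2))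
  simp [M7, M9, e, Finsupp.single_apply, Prod.ext_iff] at h2
theorem Mne_7_10 : M7 ≠ M10 := by
  intro h
  have h2 := DFunLike.congr_fun h ((0:Fin 2),(0:Fin 2),(1:Fin 2))
  simp [M7, M10, e, Finsupp.single_apply, Prod.ext_iff] at h2
theorem Mne_7_11 : M7 ≠ M11 := by
  intro h
  have h2 := DFunLike.congr_fun h ((0:Fin 2),(0:Fin 2),(1:Fin 2))
  simp [M7, M11, e, Finsupp.single_apply, Prod.ext_iff] at h2
theorem Mne_7_12 : M7 ≠ M12 := by
  intro h
  have h2 := DFunLike.congr_fun h ((0:Fin 2),(0:Fin 2),(1:Fin 2))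
  simp [M7, M12, e, Finsupp.single_apply, Prod.ext_iff] at h2
theorem Mne_8_1 : M8 ≠ M1 := by
  intro h
  have h2 := DFunLike.congr_fun h ((0:Fin 2),(0:Fin 2),(0:Fin 2))
  simp [M8, M1, e, Finsupp.single_apply, Prod.ext_iff] at h2
theorem Mne_8_2 : M8 ≠ M2 := by
  intro h
  have h2 := DFunLike.congr_fun h ((0:Fin 2),(0:Fin 2),(0:Fin 2))
  simp [M8, M2, e, Finsupp.single_apply, Prod.ext_iff] at h2
theorem Mne_8_3 : M8 ≠ M3 := by
  intro h
  have h2 := DFunLike.congr_fun h ((0:Fin 2),(0:Fin 2),(0:Fin 2))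
  simp [M8, M3, e, Finsupp.single_apply, Prod.ext_iff] at h2
theorem Mne_8_4 : M8 ≠ M4 := by
  intro h
  have h2 := DFunLike.congr_fun h ((0:Fin 2),(0:Fin 2),(0:Fin 2))
  simp [M8, M4, e, Finsupp.single_apply, Prod.ext_iff] at h2
theorem Mne_8_5 : M8 ≠ M5 := by
  intro h
  have h2 := DFunLike.congr_fun h ((0:Fin 2),(0:Fin 2),(0:Fin 2))
  simp [M8, M5, e, Finsupp.single_apply, Prod.ext_iff] at h2
theorem Mne_8_6 : M8 ≠ M6 := by
  intro h
  have h2 := DFunLike.congr_fun h ((0:Fin 2),(0:Fin 2),(1:Fin 2))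
  simp [M8, M6, e, Finsupp.single_apply, Prod.ext_iff] at h2
theorem Mne_8_7 : M8 ≠ M7 := by
  intro h
  have h2 := DFunLike.congr_fun h ((1:Fin 2),(0:Fin 2),(0:Fin 2))
  simp [M8, M7, e, Finsupp.single_apply, Prod.ext_iff] at h2
theorem Mne_8_9 : M8 ≠ M9 := by
  intro h
  have h2 := DFunLike.congr_fun h ((0:Fin 2),(1:Fin 2),(0:Fin 2))
  simp [M8, M9, e, Finsupp.single_apply, Prod.ext_iff] at h2
theorem Mne_8_10 : M8 ≠ M10 := by
  intro h
  have h2 := DFunLike.congr_fun h ((0:Fin 2),(0:Fin 2),(1:Fin 2))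
  simp [M8, M10, e, Finsupp.single_apply, Prod.ext_iff] at h2
theorem Mne_8_11 : M8 ≠ M11 := by
  intro h
  have h2 := DFunLike.congr_fun h ((0:Fin 2),(0:Fin 2),(1:Fin 2))
  simp [M8, M11, e, Finsupp.single_apply, Prod.ext_iff] at h2
theorem Mne_8_12 : M8 ≠ M12 := by
  intro h
  have h2 := DFunLike.congr_fun h ((0:Fin 2),(0:Fin 2),(1:Fin 2))
  simp [M8, M12, e, Finsupp.single_apply, Prod.ext_iff] at h2
theorem Mne_9_1 : M9 ≠ M1 := by
  intro h
  have h2 := DFunLike.congr_fun h ((0:Fin 2),(0:Fin 2),(0:Fin 2))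
  simp [M9, M1, e, Finsupp.single_apply, Prod.ext_iff] at h2
theorem Mne_9_2 : M9 ≠ M2 := by
  intro h
  have h2 := DFunLike.congr_fun h ((0:Fin 2),(0:Fin 2),(0:Fin 2))
  simp [M9, M2, e, Finsupp.single_apply, Prod.ext_iff] at h2
theorem Mne_9_3 : M9 ≠ M3 := by
  intro h
  have h2 := DFunLike.congr_fun h ((0:Fin 2),(0:Fin 2),(0:Fin 2))
  simp [M9, M3, e, Finsupp.single_apply, Prod.ext_iff] at h2
theorem Mne_9_4 : M9 ≠ M4 := by
  intro h
  have h2 := DFunLike.congr_fun h ((0:Fin 2),(0:Fin 2),(0:Fin 2))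
  simp [M9, M4, e, Finsupp.single_apply, Prod.ext_iff] at h2
theorem Mne_9_5 : M9 ≠ M5 := by
  intro h
  have h2 := DFunLike.congr_fun h ((0:Fin 2),(0:Fin 2),(0:Fin 2))
  simp [M9, M5, e, Finsupp.single_apply, Prod.ext_iff] at h2
theorem Mne_9_6 : M9 ≠ M6 := by
  intro h
  have h2 := DFunLike.congr_fun h ((0:Fin 2),(0:Fin 2),(1:Fin 2))
  simp [M9, M6, e, Finsupp.single_apply, Prod.ext_iff] at h2
theorem Mne_9_7 : M9 ≠ M7 := by
  intro h
  have h2 := DFunLike.congr_fun h ((0:Fin 2),(1:Fin 2),(0:Fin 2))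
  simp [M9, M7, e, Finsupp.single_apply, Prod.ext_iff] at h2
theorem Mne_9_8 : M9 ≠ M8 := by
  intro h
  have h2 := DFunLike.congr_fun h ((0:Fin 2),(1:Fin 2),(0:Fin 2))
  simp [M9, M8, e, Finsupp.single_apply, Prod.ext_iff] at h2
theorem Mne_9_10 : M9 ≠ M10 := by
  intro h
  have h2 := DFunLike.congr_fun h ((0:Fin 2),(0:Fin 2),(1:Fin 2))
  simp [M9, M10, e, Finsupp.single_apply, Prod.ext_iff] at h2
theorem Mne_9_11 : M9 ≠ M11 := by
  intro h
  have h2 := DFunLike.congr_fun h ((0:Fin 2),(0:Fin 2),(1:Fin 2))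
  simp [M9, M11, e, Finsupp.single_apply, Prod.ext_iff] at h2
theorem Mne_9_12 : M9 ≠ M12 := by
  intro h
  have h2 := DFunLike.congr_fun h ((0:Fin 2),(0:Fin 2),(1:Fin 2))
  simp [M9, M12, e, Finsupp.single_apply, Prod.ext_iff] at h2
theorem Mne_10_1 : M10 ≠ M1 := by
  intro h
  have h2 := DFunLike.congr_fun h ((0:Fin 2),(0:Fin 2),(0:Fin 2))
  simp [M10, M1, e, Finsupp.single_apply, Prod.ext_iff] at h2
theorem Mne_10_2 : M10 ≠ M2 := by
  intro h
  have h2 := DFunLike.congr_fun h ((0:Fin 2),(0:Fin 2),(0:Fin 2))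
  simp [M10, M2, e, Finsupp.single_apply, Prod.ext_iff] at h2
theorem Mne_10_3 : M10 ≠ M3 := by
  intro h
  have h2 := DFunLike.congr_fun h ((0:Fin 2),(0:Fin 2),(0:Fin 2))
  simp [M10, M3, e, Finsupp.single_apply, Prod.ext_iff] at h2
theorem Mne_10_4 : M10 ≠ M4 := by
  intro h
  have h2 := DFunLike.congr_fun h ((0:Fin 2),(0:Fin 2),(0:Fin 2))
  simp [M10, M4, e, Finsupp.single_apply, Prod.ext_iff] at h2
theorem Mne_10_5 : M10 ≠ M5 := by
  intro h
  have h2 := DFunLike.congr_fun h ((0:Fin 2),(0:Fin 2),(0:Fin 2))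
  simp [M10, M5, e, Finsupp.single_apply, Prod.ext_iff] at h2
theorem Mne_10_6 : M10 ≠ M6 := by
  intro h
  have h2 := DFunLike.congr_fun h ((0:Fin 2),(0:Fin 2),(1:Fin 2))
  simp [M10, M6, e, Finsupp.single_apply, Prod.ext_iff] at h2
theorem Mne_10_7 : M10 ≠ M7 := by
  intro h
  have h2 := DFunLike.congr_fun h ((0:Fin 2),(0:Fin 2),(1:Fin 2))
  simp [M10, M7, e, Finsupp.single_apply, Prod.ext_iff] at h2
theorem Mne_10_8 : M10 ≠ M8 := by
  intro h
  have h2 := DFunLike.congr_fun h ((0:Fin 2),(0:Fin 2),(1:Fin 2))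
  simp [M10, M8, e, Finsupp.single_apply, Prod.ext_iff] at h2
theorem Mne_10_9 : M10 ≠ M9 := by
  intro h
  have h2 := DFunLike.congr_fun h ((0:Fin 2),(0:Fin 2),(1:Fin 2))
  simp [M10, M9, e, Finsupp.single_apply, Prod.ext_iff] at h2
theorem Mne_10_11 : M10 ≠ M11 := by
  intro h
  have h2 := DFunLike.congr_fun h ((0:Fin 2),(1:Fin 2),(0:Fin 2))
  simp [M10, M11, e, Finsupp.single_apply, Prod.ext_iff] at h2
theorem Mne_10_12 : M10 ≠ M12 := by
  intro h
  have h2 := DFunLike.congr_fun h ((0:Fin 2),(1:Fin 2),(0:Fin 2))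
  simp [M10, M12, e, Finsupp.single_apply, Prod.ext_iff] at h2
theorem Mne_11_1 : M11 ≠ M1 := by
  intro h
  have h2 := DFunLike.congr_fun h ((0:Fin 2),(0:Fin 2),(0:Fin 2))
  simp [M11, M1, e, Finsupp.single_apply, Prod.ext_iff] at h2
theorem Mne_11_2 : M11 ≠ M2 := by
  intro h
  have h2 := DFunLike.congr_fun h ((0:Fin 2),(0:Fin 2),(0:Fin 2))
  simp [M11, M2, e, Finsupp.single_apply, Prod.ext_iff] at h2
theorem Mne_11_3 : M11 ≠ M3 := by
  intro h
  have h2 := DFunLike.congr_fun h ((0:Fin 2),(0:Fin 2),(0:Fin 2))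
  simp [M11, M3, e, Finsupp.single_apply, Prod.ext_iff] at h2
theorem Mne_11_4 : M11 ≠ M4 := by
  intro h
  have h2 := DFunLike.congr_fun h ((0:Fin 2),(0:Fin 2),(0:Fin 2))
  simp [M11, M4, e, Finsupp.single_apply, Prod.ext_iff] at h2
theorem Mne_11_5 : M11 ≠ M5 := by
  intro h
  have h2 := DFunLike.congr_fun h ((0:Fin 2),(0:Fin 2),(0:Fin 2))
  simp [M11, M5, e, Finsupp.single_apply, Prod.ext_iff] at h2
theorem Mne_11_6 : M11 ≠ M6 := by
  intro h
  have h2 := DFunLike.congr_fun h ((0:Fin 2),(0:Fin 2),(1:Fin 2))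
  simp [M11, M6, e, Finsupp.single_apply, Prod.ext_iff] at h2
theorem Mne_11_7 : M11 ≠ M7 := by
  intro h
  have h2 := DFunLike.congr_fun h ((0:Fin 2),(0:Fin 2),(1:Fin 2))
  simp [M11, M7, e, Finsupp.single_apply, Prod.ext_iff] at h2
theorem Mne_11_8 : M11 ≠ M8 := by
  intro h
  have h2 := DFunLike.congr_fun h ((0:Fin 2),(0:Fin 2),(1:Fin 2))
  simp [M11, M8, e, Finsupp.single_apply, Prod.ext_iff] at h2
theorem Mne_11_9 : M11 ≠ M9 := by
  intro h
  have h2 := DFunLike.congr_fun h ((0:Fin 2),(0:Fin 2),(1:Fin 2))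
  simp [M11, M9, e, Finsupp.single_apply, Prod.ext_iff] at h2
theorem Mne_11_10 : M11 ≠ M10 := by
  intro h
  have h2 := DFunLike.congr_fun h ((0:Fin 2),(1:Fin 2),(0:Fin 2))
  simp [M11, M10, e, Finsupp.single_apply, Prod.ext_iff] at h2
theorem Mne_11_12 : M11 ≠ M12 := by
  intro h
  have h2 := DFunLike.congr_fun h ((0:Fin 2),(1:Fin 2),(0:Fin 2))
  simp [M11, M12, e, Finsupp.single_apply, Prod.ext_iff] at h2
theorem Mne_12_1 : M12 ≠ M1 := by
  intro h
  have h2 := DFunLike.congr_fun h ((0:Fin 2),(0:Fin 2),(0:Fin 2))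
  simp [M12, M1, e, Finsupp.single_apply, Prod.ext_iff] at h2
theorem Mne_12_2 : M12 ≠ M2 := by
  intro h
  have h2 := DFunLike.congr_fun h ((0:Fin 2),(0:Fin 2),(0:Fin 2))
  simp [M12, M2, e, Finsupp.single_apply, Prod.ext_iff] at h2
theorem Mne_12_3 : M12 ≠ M3 := by
  intro h
  have h2 := DFunLike.congr_fun h ((0:Fin 2),(0:Fin 2),(0:Fin 2))
  simp [M12, M3, e, Finsupp.single_apply, Prod.ext_iff] at h2
theorem Mne_12_4 : M12 ≠ M4 := by
  intro h
  have h2 := DFunLike.congr_fun h ((0:Fin 2),(0:Fin 2),(0:Fin 2))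
  simp [M12, M4, e, Finsupp.single_apply, Prod.ext_iff] at h2
theorem Mne_12_5 : M12 ≠ M5 := by
  intro h
  have h2 := DFunLike.congr_fun h ((0:Fin 2),(0:Fin 2),(0:Fin 2))
  simp [M12, M5, e, Finsupp.single_apply, Prod.ext_iff] at h2
theorem Mne_12_6 : M12 ≠ M6 := by
  intro h
  have h2 := DFunLike.congr_fun h ((0:Fin 2),(0:Fin 2),(1:Fin 2))
  simp [M12, M6, e, Finsupp.single_apply, Prod.ext_iff] at h2
theorem Mne_12_7 : M12 ≠ M7 := by
  intro h
  have h2 := DFunLike.congr_fun h ((0:Fin 2),(0:Fin 2),(1:Fin 2))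
  simp [M12, M7, e, Finsupp.single_apply, Prod.ext_iff] at h2
theorem Mne_12_8 : M12 ≠ M8 := by
  intro h
  have h2 := DFunLike.congr_fun h ((0:Fin 2),(0:Fin 2),(1:Fin 2))
  simp [M12, M8, e, Finsupp.single_apply, Prod.ext_iff] at h2
theorem Mne_12_9 : M12 ≠ M9 := by
  intro h
  have h2 := DFunLike.congr_fun h ((0:Fin 2),(0:Fin 2),(1:Fin 2))
  simp [M12, M9, e, Finsupp.single_apply, Prod.ext_iff] at h2
theorem Mne_12_10 : M12 ≠ M10 := by
  intro h
  have h2 := DFunLike.congr_fun h ((0:Fin 2),(1:Fin 2),(0:Fin 2))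
  simp [M12, M10, e, Finsupp.single_apply, Prod.ext_iff] at h2
theorem Mne_12_11 : M12 ≠ M11 := by
  intro h
  have h2 := DFunLike.congr_fun h ((0:Fin 2),(1:Fin 2),(0:Fin 2))
  simp [M12, M11, e, Finsupp.single_apply, Prod.ext_iff] at h2

theorem M1_eq (a : ℂ) : (monomial M1 a : P) = C a * X (0,0,0) ^ 2 * X (1,1,1) ^ 2 := by
  simp only [X_pow_eq_monomial, C_mul_monomial, monomial_mul, mul_one, M1, e]
theorem M2_eq (a : ℂ) : (monomial M2 a : P) = C a * X (0,0,0) * X (0,0,1) * X (1,1,0) * X (1,1,1) := by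
  simp only [MvPolynomial.X, C_mul_monomial, monomial_mul, mul_one, M2, e]
theorem M3_eq (a : ℂ) : (monomial M3 a : P) = C a * X (0,0,0) * X (0,1,0) * X (1,0,1) * X (1,1,1) := by
  simp only [MvPolynomial.X, C_mul_monomial, monomial_mul, mul_one, M3, e]
theorem M4_eq (a : ℂ) : (monomial M4 a : P) = C a * X (0,0,0) * X (0,1,1) * X (1,0,0) * X (1,1,1) := by
  simp only [MvPolynomial.X, C_mul_monomial, monomial_mul, mul_one, M4, e]
theorem M5_eq (a : ℂ) : (monomial M5 a : P) = C a * X (0,0,0) * X (0,1,1) * X (1,0,1) * X (1,1,0) := by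
  simp only [MvPolynomial.X, C_mul_monomial, monomial_mul, mul_one, M5, e]
theorem M6_eq (a : ℂ) : (monomial M6 a : P) = C a * X (0,0,1) ^ 2 * X (1,1,0) ^ 2 := by
  simp only [X_pow_eq_monomial, C_mul_monomial, monomial_mul, mul_one, M6, e]
theorem M7_eq (a : ℂ) : (monomial M7 a : P) = C a * X (0,0,1) * X (0,1,0) * X (1,0,0) * X (1,1,1) := by
  simp only [MvPolynomial.X, C_mul_monomial, monomial_mul, mul_one, M7, e]
theorem M8_eq (a : ℂ) : (monomial M8 a : P) = C a * X (0,0,1) * X (0,1,0) * X (1,0,1) * X (1,1,0) := by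
  simp only [MvPolynomial.X, C_mul_monomial, monomial_mul, mul_one, M8, e]
theorem M9_eq (a : ℂ) : (monomial M9 a : P) = C a * X (0,0,1) * X (0,1,1) * X (1,0,0) * X (1,1,0) := by
  simp only [MvPolynomial.X, C_mul_monomial, monomial_mul, mul_one, M9, e]
theorem M10_eq (a : ℂ) : (monomial M10 a : P) = C a * X (0,1,0) ^ 2 * X (1,0,1) ^ 2 := by
  simp only [X_pow_eq_monomial, C_mul_monomial, monomial_mul, mul_one, M10, e]
theorem M11_eq (a : ℂ) : (monomial M11 a : P) = C a * X (0,1,0) * X (0,1,1) * X (1,0,0) * X (1,0,1) := by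
  simp only [MvPolynomial.X, C_mul_monomial, monomial_mul, mul_one, M11, e]
theorem M12_eq (a : ℂ) : (monomial M12 a : P) = C a * X (0,1,1) ^ 2 * X (1,0,0) ^ 2 := by
  simp only [X_pow_eq_monomial, C_mul_monomial, monomial_mul, mul_one, M12, e]

set_option maxHeartbeats 1000000 in
theorem stepA (f : P) (hhom : MvPolynomial.IsHomogeneous f 4)
    (hinv : ∀ A B C : Matrix.SpecialLinearGroup (Fin 2) ℂ, act A B C f = f) :
    f = monomial M1 (coeff M1 f) + monomial M2 (coeff M2 f) + monomial M3 (coeff M3 f)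
      + monomial M4 (coeff M4 f) + monomial M5 (coeff M5 f) + monomial M6 (coeff M6 f)
      + monomial M7 (coeff M7 f) + monomial M8 (coeff M8 f) + monomial M9 (coeff M9 f)
      + monomial M10 (coeff M10 f) + monomial M11 (coeff M11 f) + monomial M12 (coeff M12 f) := by
  classical
  apply MvPolynomial.ext
  intro n
  have hterm : ∀ m : σ' →₀ ℕ, (coeff n (monomial m (coeff m f)) : ℂ)
      = if m = n then coeff n f else 0 := by
    intro m
    rw [coeff_monomial]
    by_cases h : m = n
    · rw [if_pos h, if_pos h, h]
    · rw [if_neg h, if_neg h]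
  simp only [coeff_add, hterm]
  by_cases hn : coeff n f = 0
  · rw [hn]
    simp
  · have hdeg : Finsupp.degree n = 4 := by
      by_contra hne
      exact hn (hhom.coeff_eq_zero hne)
    have hsum : ∑ p : σ', n p = 4 := by
      rw [← hdeg, Finsupp.degree]
      exact (Finset.sum_subset (Finset.subset_univ _)
        (fun p _ hp => Finsupp.notMem_support_iff.mp hp)).symm
    simp only [Fintype.sum_prod_type, Fin.sum_univ_two] at hsum
    have hd : n (0,0,0) + n (0,0,1) + n (0,1,0) + n (0,1,1) + n (1,0,0) + n (1,0,1)
        + n (1,1,0) + n (1,1,1) = 4 := by omega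
    rcases classify n hd (balance_fst f hinv n hn) (balance_snd f hinv n hn)
        (balance_trd f hinv n hn) with rfl|rfl|rfl|rfl|rfl|rfl|rfl|rfl|rfl|rfl|rfl|rfl <;>
      simp [Mne_1_2, Mne_1_3, Mne_1_4, Mne_1_5, Mne_1_6, Mne_1_7, Mne_1_8, Mne_1_9, Mne_1_10, Mne_1_11, Mne_1_12, Mne_2_1, Mne_2_3, Mne_2_4, Mne_2_5, Mne_2_6, Mne_2_7, Mne_2_8, Mne_2_9, Mne_2_10, Mne_2_11, Mne_2_12, Mne_3_1, Mne_3_2, Mne_3_4, Mne_3_5, Mne_3_6, Mne_3_7, Mne_3_8, Mne_3_9, Mne_3_10, Mne_3_11, Mne_3_12, Mne_4_1, Mne_4_2, Mne_4_3, Mne_4_5, Mne_4_6, Mne_4_7, Mne_4_8, Mne_4_9, Mne_4_10, Mne_4_11, Mne_4_12, Mne_5_1, Mne_5_2, Mne_5_3, Mne_5_4, Mne_5_6, Mne_5_7, Mne_5_8, Mne_5_9, Mne_5_10, Mne_5_11, Mne_5_12, Mne_6_1, Mne_6_2, Mne_6_3, Mne_6_4, Mne_6_5, Mne_6_7, Mne_6_8,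 Mne_6_9, Mne_6_10, Mne_6_11, Mne_6_12, Mne_7_1, Mne_7_2, Mne_7_3, Mne_7_4, Mne_7_5, Mne_7_6, Mne_7_8, Mne_7_9, Mne_7_10, Mne_7_11, Mne_7_12, Mne_8_1, Mne_8_2, Mne_8_3, Mne_8_4, Mne_8_5, Mne_8_6, Mne_8_7, Mne_8_9, Mne_8_10, Mne_8_11, Mne_8_12, Mne_9_1, Mne_9_2, Mne_9_3, Mne_9_4, Mne_9_5, Mne_9_6, Mne_9_7, Mne_9_8, Mne_9_10, Mne_9_11, Mne_9_12, Mne_10_1, Mne_10_2, Mne_10_3, Mne_10_4, Mne_10_5, Mne_10_6, Mne_10_7, Mne_10_8, Mne_10_9, Mne_10_11, Mne_10_12, Mne_11_1, Mne_11_2, Mne_11_3, Mne_11_4, Mne_11_5, Mne_11_6, Mne_11_7, Mne_11_8, Mne_11_9, Mne_11_10, Mne_11_12, Mne_12_1, Mne_12_2, Mne_12_3, Mne_12_4, Mne_12_5, Mne_12_6, Mne_12_7, Mne_12_8, Mne_12_9, Mne_12_10, Mne_12_11]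

def U : Matrix.SpecialLinearGroup (Fin 2) ℂ :=
  ⟨!![1, 1; 0, 1], by norm_num [Matrix.det_fin_two_of]⟩

lemma act_U_fst (g : P) : act U 1 1 g =
    aeval (fun p : σ' => if p.1 = (0 : Fin 2) then X p else X (0, p.2.1, p.2.2) + X p) g := by
  have h : (fun p : σ' => ∑ i' : Fin 2, ∑ j' : Fin 2, ∑ k' : Fin 2,
      MvPolynomial.C (U.val i' p.1 * (1 : Matrix.SpecialLinearGroup (Fin 2) ℂ).val j' p.2.1
        * (1 : Matrix.SpecialLinearGroup (Fin 2) ℂ).val k' p.2.2) *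
        MvPolynomial.X (R := ℂ) (i', j', k'))
      = fun p : σ' => if p.1 = (0 : Fin 2) then X p else X (0, p.2.1, p.2.2) + X p := by
    funext p; obtain ⟨i, j, k⟩ := p
    fin_cases i <;> fin_cases j <;> fin_cases k <;>
      norm_num [U, Fin.sum_univ_two, Matrix.one_apply]
  rw [act, h]

lemma act_U_snd (g : P) : act 1 U 1 g =
    aeval (fun p : σ' => if p.2.1 = (0 : Fin 2) then X p else X (p.1, 0, p.2.2) + X p) g := by
  have h : (fun p : σ' => ∑ i' : Fin 2, ∑ j' : Fin 2, ∑ k' : Fin 2,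
      MvPolynomial.C ((1 : Matrix.SpecialLinearGroup (Fin 2) ℂ).val i' p.1 * U.val j' p.2.1
        * (1 : Matrix.SpecialLinearGroup (Fin 2) ℂ).val k' p.2.2) *
        MvPolynomial.X (R := ℂ) (i', j', k'))
      = fun p : σ' => if p.2.1 = (0 : Fin 2) then X p else X (p.1, 0, p.2.2) + X p := by
    funext p; obtain ⟨i, j, k⟩ := p
    fin_cases i <;> fin_cases j <;> fin_cases k <;>
      norm_num [U, Fin.sum_univ_two, Matrix.one_apply]
  rw [act, h]

lemma act_U_trd (g : P) : act 1 1 U g =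
    aeval (fun p : σ' => if p.2.2 = (0 : Fin 2) then X p else X (p.1, p.2.1, 0) + X p) g := by
  have h : (fun p : σ' => ∑ i' : Fin 2, ∑ j' : Fin 2, ∑ k' : Fin 2,
      MvPolynomial.C ((1 : Matrix.SpecialLinearGroup (Fin 2) ℂ).val i' p.1
        * (1 : Matrix.SpecialLinearGroup (Fin 2) ℂ).val j' p.2.1 * U.val k' p.2.2) *
        MvPolynomial.X (R := ℂ) (i', j', k'))
      = fun p : σ' => if p.2.2 = (0 : Fin 2) then X p else X (p.1, p.2.1, 0) + X p := by
    funext p; obtain ⟨i, j, k⟩ := p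
    fin_cases i <;> fin_cases j <;> fin_cases k <;>
      norm_num [U, Fin.sum_univ_two, Matrix.one_apply]
  rw [act, h]

lemma eval_aeval' (φ : σ' → P) (v : σ' → ℂ) (g : P) :
    eval v (aeval φ g) = eval (fun p => eval v (φ p)) g := by
  rw [aeval_def, algebraMap_eq, ← eval_assoc]
  rfl


set_option maxHeartbeats 2000000 in
/-- In degree 4 the space of invariant polynomials has dimension 1: every invariant
homogeneous polynomial of degree 4 is a scalar multiple of Cayley's hyperdeterminant. -/
theorem invariants_degree_four_multiple_of_hyperdeterminant (f : P)
    (hhom : MvPolynomial.IsHomogeneous f 4)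
    (hinv : ∀ A B C : Matrix.SpecialLinearGroup (Fin 2) ℂ, act A B C f = f) :
    ∃ lam : ℂ, f = lam • Det := by
  refine ⟨coeff M12 f, ?_⟩
  have hA := stepA f hhom hinv
  have h1 := congrArg (eval (fun p : σ' => if p = (0,0,1) ∨ p = (0,1,0) then (1:ℂ) else 0)) (hinv U 1 1)
  rw [hA] at h1
  rw [act_U_fst, eval_aeval'] at h1
  simp only [M1_eq, M2_eq, M3_eq, M4_eq, M5_eq, M6_eq, M7_eq, M8_eq, M9_eq, M10_eq,
    M11_eq, M12_eq, map_add, map_mul, map_pow, eval_C, eval_X] at h1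
  norm_num [Prod.ext_iff] at h1
  have h2 := congrArg (eval (fun p : σ' => if p = (0,0,0) ∨ p = (0,1,1) then (1:ℂ) else 0)) (hinv U 1 1)
  rw [hA] at h2
  rw [act_U_fst, eval_aeval'] at h2
  simp only [M1_eq, M2_eq, M3_eq, M4_eq, M5_eq, M6_eq, M7_eq, M8_eq, M9_eq, M10_eq,
    M11_eq, M12_eq, map_add, map_mul, map_pow, eval_C, eval_X] at h2
  norm_num [Prod.ext_iff] at h2
  have h3 := congrArg (eval (fun p : σ' => if p = (0,0,1) ∨ p = (1,0,0) then (1:ℂ) else 0)) (hinv 1 U 1)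
  rw [hA] at h3
  rw [act_U_snd, eval_aeval'] at h3
  simp only [M1_eq, M2_eq, M3_eq, M4_eq, M5_eq, M6_eq, M7_eq, M8_eq, M9_eq, M10_eq,
    M11_eq, M12_eq, map_add, map_mul, map_pow, eval_C, eval_X] at h3
  norm_num [Prod.ext_iff] at h3
  have h4 := congrArg (eval (fun p : σ' => if p = (0,0,0) ∨ p = (1,0,1) then (1:ℂ) else 0)) (hinv 1 U 1)
  rw [hA] at h4
  rw [act_U_snd, eval_aeval'] at h4
  simp only [M1_eq, M2_eq, M3_eq, M4_eq, M5_eq, M6_eq, M7_eq, M8_eq, M9_eq, M10_eq,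
    M11_eq, M12_eq, map_add, map_mul, map_pow, eval_C, eval_X] at h4
  norm_num [Prod.ext_iff] at h4
  have h5 := congrArg (eval (fun p : σ' => if p = (0,1,0) ∨ p = (1,0,0) then (1:ℂ) else 0)) (hinv 1 1 U)
  rw [hA] at h5
  rw [act_U_trd, eval_aeval'] at h5
  simp only [M1_eq, M2_eq, M3_eq, M4_eq, M5_eq, M6_eq, M7_eq, M8_eq, M9_eq, M10_eq,
    M11_eq, M12_eq, map_add, map_mul, map_pow, eval_C, eval_X] at h5
  norm_num [Prod.ext_iff] at h5
  have h6 := congrArg (eval (fun p : σ' => if p = (0,0,0) ∨ p = (1,1,0) then (1:ℂ) else 0)) (hinv 1 1 U)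
  rw [hA] at h6
  rw [act_U_trd, eval_aeval'] at h6
  simp only [M1_eq, M2_eq, M3_eq, M4_eq, M5_eq, M6_eq, M7_eq, M8_eq, M9_eq, M10_eq,
    M11_eq, M12_eq, map_add, map_mul, map_pow, eval_C, eval_X] at h6
  norm_num [Prod.ext_iff] at h6
  have h7 := congrArg (eval (fun p : σ' => if p = (0,0,1) ∨ p = (0,1,0) ∨ p = (1,1,0) then (1:ℂ) else 0)) (hinv U 1 1)
  rw [hA] at h7
  rw [act_U_fst, eval_aeval'] at h7
  simp only [M1_eq, M2_eq, M3_eq, M4_eq, M5_eq, M6_eq, M7_eq, M8_eq, M9_eq, M10_eq,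
    M11_eq, M12_eq, map_add, map_mul, map_pow, eval_C, eval_X] at h7
  norm_num [Prod.ext_iff] at h7
  have h8 := congrArg (eval (fun p : σ' => if p = (0,0,0) ∨ p = (0,1,1) ∨ p = (1,1,1) then (1:ℂ) else 0)) (hinv U 1 1)
  rw [hA] at h8
  rw [act_U_fst, eval_aeval'] at h8
  simp only [M1_eq, M2_eq, M3_eq, M4_eq, M5_eq, M6_eq, M7_eq, M8_eq, M9_eq, M10_eq,
    M11_eq, M12_eq, map_add, map_mul, map_pow, eval_C, eval_X] at h8
  norm_num [Prod.ext_iff] at h8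
  have h9 := congrArg (eval (fun p : σ' => if p = (0,0,1) ∨ p = (1,0,0) ∨ p = (1,1,0) then (1:ℂ) else 0)) (hinv 1 U 1)
  rw [hA] at h9
  rw [act_U_snd, eval_aeval'] at h9
  simp only [M1_eq, M2_eq, M3_eq, M4_eq, M5_eq, M6_eq, M7_eq, M8_eq, M9_eq, M10_eq,
    M11_eq, M12_eq, map_add, map_mul, map_pow, eval_C, eval_X] at h9
  norm_num [Prod.ext_iff] at h9
  have h10 := congrArg (eval (fun p : σ' => if p = (0,0,1) ∨ p = (0,1,0) ∨ p = (0,1,1) ∨ p = (1,0,0) then (1:ℂ) else 0)) (hinv U 1 1)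
  rw [hA] at h10
  rw [act_U_fst, eval_aeval'] at h10
  simp only [M1_eq, M2_eq, M3_eq, M4_eq, M5_eq, M6_eq, M7_eq, M8_eq, M9_eq, M10_eq,
    M11_eq, M12_eq, map_add, map_mul, map_pow, eval_C, eval_X] at h10
  norm_num [Prod.ext_iff] at h10
  have h11 := congrArg (eval (fun p : σ' => if p = (0,0,0) ∨ p = (0,1,0) ∨ p = (0,1,1) ∨ p = (1,0,1) then (1:ℂ) else 0)) (hinv U 1 1)
  rw [hA] at h11
  rw [act_U_fst, eval_aeval'] at h11
  simp only [M1_eq, M2_eq, M3_eq, M4_eq, M5_eq, M6_eq, M7_eq, M8_eq, M9_eq, M10_eq,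
    M11_eq, M12_eq, map_add, map_mul, map_pow, eval_C, eval_X] at h11
  norm_num [Prod.ext_iff] at h11
  have hc1 : coeff M1 f = coeff M12 f := by linear_combination (-2:ℂ) * h2 + (1:ℂ) * h8
  have hc2 : coeff M2 f = (-2:ℂ) * coeff M12 f := by linear_combination (2:ℂ) * h2 + (2:ℂ) * h3 + (1:ℂ) * h6 + (-1:ℂ) * h8 + (-1:ℂ) * h9
  have hc3 : coeff M3 f = (-2:ℂ) * coeff M12 f := by linear_combination (-2:ℂ) * h1 + (2:ℂ) * h2 + (2:ℂ) * h3 + (1:ℂ) * h4 + (1:ℂ) * h7 + (-1:ℂ) * h8 + (-1:ℂ) * h9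
  have hc4 : coeff M4 f = (-2:ℂ) * coeff M12 f := by linear_combination (3:ℂ) * h2 + (-1:ℂ) * h8
  have hc5 : coeff M5 f = (4:ℂ) * coeff M12 f := by linear_combination (4:ℂ) * h1 + (-3:ℂ) * h2 + (-4:ℂ) * h3 + (-1:ℂ) * h4 + (-1:ℂ) * h5 + (-2:ℂ) * h7 + (1:ℂ) * h8 + (2:ℂ) * h9 + (1:ℂ) * h11
  have hc6 : coeff M6 f = coeff M12 f := by linear_combination (-2:ℂ) * h3 + (1:ℂ) * h9
  have hc7 : coeff M7 f = (4:ℂ) * coeff M12 f := by linear_combination (1:ℂ) * h1 + (-5:ℂ) * h3 + (-1:ℂ) * h5 + (-1:ℂ) * h7 + (2:ℂ) * h9 + (1:ℂ) * h10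
  have hc8 : coeff M8 f = (-2:ℂ) * coeff M12 f := by linear_combination (-1:ℂ) * h1 + (4:ℂ) * h3 + (1:ℂ) * h7 + (-2:ℂ) * h9
  have hc9 : coeff M9 f = (-2:ℂ) * coeff M12 f := by linear_combination (3:ℂ) * h3 + (-1:ℂ) * h9
  have hc10 : coeff M10 f = coeff M12 f := by linear_combination (2:ℂ) * h1 + (-2:ℂ) * h3 + (-1:ℂ) * h7 + (1:ℂ) * h9
  have hc11 : coeff M11 f = (-2:ℂ) * coeff M12 f := by linear_combination (-2:ℂ) * h1 + (2:ℂ) * h3 + (1:ℂ) * h5 + (1:ℂ) * h7 + (-1:ℂ) * h9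
  conv_lhs => rw [hA, M1_eq, M2_eq, M3_eq, M4_eq, M5_eq, M6_eq, M7_eq, M8_eq, M9_eq, M10_eq,
    M11_eq, M12_eq, hc1, hc2, hc3, hc4, hc5, hc6, hc7, hc8, hc9, hc10, hc11]
  simp only [Det, x, smul_eq_C_mul, map_mul, map_neg, map_ofNat]
  ring
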